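/- The function u(x,t) = a₀ − 2 a₀ tanh(x − c t)² satisfies the Gardner-Kawahara equation u_t + a u_x + λ u u_x − α u² u_x + μ u_xxx + β u_xxxxx = 0, where α = 15(a − c)/(7 a₀²), β = (a − c)/42, λ = 4(a − c)/(7 a₀), and μ = (a − c)/3. -/

import Mathlib

lemma tanh_hasDerivAt' (s : ℝ) : HasDerivAt Real.tanh (1 - Real.tanh s ^ 2) s := by
  have hc : Real.cosh s ≠ 0 := (Real.cosh_pos s).ne'
  have h := (Real.hasDerivAt_sinh s).div (Real.hasDerivAt_cosh s) hc
  have he : Real.tanh = fun y => Real.sinh y / Real.cosh y :=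
    funext fun y => Real.tanh_eq_sinh_div_cosh y
  rw [he]
  refine h.congr_deriv ?_
  show _ = 1 - (Real.sinh s / Real.cosh s) ^ 2
  have hsq := Real.cosh_sq s
  field_simp

lemma tanh_shift (b x : ℝ) :
    HasDerivAt (fun x => Real.tanh (x - b)) (1 - Real.tanh (x - b) ^ 2) x := by
  have h := (tanh_hasDerivAt' (x - b)).comp x ((hasDerivAt_id x).sub_const b)
  simpa [Function.comp_def] using h

section helpers

variable (a0 b : ℝ)

lemma d1 (x : ℝ) :
    HasDerivAt (fun x => a0 - 2 * a0 * Real.tanh (x - b) ^ 2)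
      (-4 * a0 * (Real.tanh (x - b) - Real.tanh (x - b) ^ 3)) x := by
  have h := (((tanh_shift b x).pow 2).const_mul (2 * a0)).const_sub a0
  refine h.congr_deriv ?_
  ring

lemma d2 (x : ℝ) :
    HasDerivAt (fun x => -4 * a0 * (Real.tanh (x - b) - Real.tanh (x - b) ^ 3))
      (-4 * a0 * (1 - 4 * Real.tanh (x - b) ^ 2 + 3 * Real.tanh (x - b) ^ 4)) x := by
  have h := ((tanh_shift b x).sub ((tanh_shift b x).pow 3)).const_mul (-4 * a0)
  refine h.congr_deriv ?_
  ring

lemma d3 (x : ℝ) :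
    HasDerivAt (fun x => -4 * a0 * (1 - 4 * Real.tanh (x - b) ^ 2 + 3 * Real.tanh (x - b) ^ 4))
      (-4 * a0 * (-8 * Real.tanh (x - b) + 20 * Real.tanh (x - b) ^ 3
        - 12 * Real.tanh (x - b) ^ 5)) x := by
  have h := ((((hasDerivAt_const x (1:ℝ)).sub (((tanh_shift b x).pow 2).const_mul 4)).add
      (((tanh_shift b x).pow 4).const_mul 3)).const_mul (-4 * a0))
  refine h.congr_deriv ?_
  ring

lemma d4 (x : ℝ) :
    HasDerivAt (fun x => -4 * a0 * (-8 * Real.tanh (x - b) + 20 * Real.tanh (x - b) ^ 3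
        - 12 * Real.tanh (x - b) ^ 5))
      (-4 * a0 * (-8 + 68 * Real.tanh (x - b) ^ 2 - 120 * Real.tanh (x - b) ^ 4
        + 60 * Real.tanh (x - b) ^ 6)) x := by
  have h := ((((tanh_shift b x).const_mul (-8)).add (((tanh_shift b x).pow 3).const_mul 20)).sub
      (((tanh_shift b x).pow 5).const_mul 12)).const_mul (-4 * a0)
  refine h.congr_deriv ?_
  ring

lemma d5 (x : ℝ) :
    HasDerivAt (fun x => -4 * a0 * (-8 + 68 * Real.tanh (x - b) ^ 2 - 120 * Real.tanh (x - b) ^ 4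
        + 60 * Real.tanh (x - b) ^ 6))
      (-4 * a0 * (136 * Real.tanh (x - b) - 616 * Real.tanh (x - b) ^ 3
        + 840 * Real.tanh (x - b) ^ 5 - 360 * Real.tanh (x - b) ^ 7)) x := by
  have h := ((((hasDerivAt_const x (-8:ℝ)).add (((tanh_shift b x).pow 2).const_mul 68)).sub
      (((tanh_shift b x).pow 4).const_mul 120)).add
      (((tanh_shift b x).pow 6).const_mul 60)).const_mul (-4 * a0)
  refine h.congr_deriv ?_
  ring

end helpers

/-- The tanh-squared solution (Set 2) of the Gardner-Kawahara equation. -/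
theorem gardner_kawahara_tanh_solution_set2
    (a c a0 : ℝ) (ha0 : a0 ≠ 0)
    (alpha beta lam mu : ℝ)
    (halpha : alpha = 15 * (a - c) / (7 * a0 ^ 2))
    (hbeta : beta = (a - c) / 42)
    (hlam : lam = 4 * (a - c) / (7 * a0))
    (hmu : mu = (a - c) / 3)
    (u : ℝ → ℝ → ℝ)
    (hu : ∀ x t, u x t = a0 - 2 * a0 * (Real.tanh (x - c * t)) ^ 2) :
    ∀ x t : ℝ,
      deriv (fun t' => u x t') t + a * deriv (fun x' => u x' t) x
        + lam * u x t * deriv (fun x' => u x' t) x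
        - alpha * (u x t) ^ 2 * deriv (fun x' => u x' t) x
        + mu * iteratedDeriv 3 (fun x' => u x' t) x
        + beta * iteratedDeriv 5 (fun x' => u x' t) x = 0 := by
  intro x t
  set b := c * t with hb
  have hux : (fun x' => u x' t) = fun x' => a0 - 2 * a0 * Real.tanh (x' - b) ^ 2 :=
    funext fun x' => hu x' t
  -- x-derivatives as function equalities
  have hD1 : deriv (fun x' => u x' t) =
      fun x => -4 * a0 * (Real.tanh (x - b) - Real.tanh (x - b) ^ 3) := by
    rw [hux]; exact funext fun x => (d1 a0 b x).deriv
  have hD2 : deriv (fun x => -4 * a0 * (Real.tanh (x - b) - Real.tanh (x - b) ^ 3)) =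
      fun x => -4 * a0 * (1 - 4 * Real.tanh (x - b) ^ 2 + 3 * Real.tanh (x - b) ^ 4) :=
    funext fun x => (d2 a0 b x).deriv
  have hD3 : deriv (fun x => -4 * a0 * (1 - 4 * Real.tanh (x - b) ^ 2
      + 3 * Real.tanh (x - b) ^ 4)) =
      fun x => -4 * a0 * (-8 * Real.tanh (x - b) + 20 * Real.tanh (x - b) ^ 3
        - 12 * Real.tanh (x - b) ^ 5) :=
    funext fun x => (d3 a0 b x).deriv
  have hD4 : deriv (fun x => -4 * a0 * (-8 * Real.tanh (x - b) + 20 * Real.tanh (x - b) ^ 3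
      - 12 * Real.tanh (x - b) ^ 5)) =
      fun x => -4 * a0 * (-8 + 68 * Real.tanh (x - b) ^ 2 - 120 * Real.tanh (x - b) ^ 4
        + 60 * Real.tanh (x - b) ^ 6) :=
    funext fun x => (d4 a0 b x).deriv
  have hD5 : deriv (fun x => -4 * a0 * (-8 + 68 * Real.tanh (x - b) ^ 2
      - 120 * Real.tanh (x - b) ^ 4 + 60 * Real.tanh (x - b) ^ 6)) =
      fun x => -4 * a0 * (136 * Real.tanh (x - b) - 616 * Real.tanh (x - b) ^ 3
        + 840 * Real.tanh (x - b) ^ 5 - 360 * Real.tanh (x - b) ^ 7) :=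
    funext fun x => (d5 a0 b x).deriv
  have hit3 : iteratedDeriv 3 (fun x' => u x' t) x =
      -4 * a0 * (-8 * Real.tanh (x - b) + 20 * Real.tanh (x - b) ^ 3
        - 12 * Real.tanh (x - b) ^ 5) := by
    rw [show iteratedDeriv 3 = iteratedDeriv (2 + 1) from rfl, iteratedDeriv_succ, iteratedDeriv_succ,
      iteratedDeriv_one, hD1, hD2, hD3]
  have hit5 : iteratedDeriv 5 (fun x' => u x' t) x =
      -4 * a0 * (136 * Real.tanh (x - b) - 616 * Real.tanh (x - b) ^ 3
        + 840 * Real.tanh (x - b) ^ 5 - 360 * Real.tanh (x - b) ^ 7) := by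
    rw [show iteratedDeriv 5 = iteratedDeriv (4 + 1) from rfl, iteratedDeriv_succ,
      show iteratedDeriv 4 = iteratedDeriv (3 + 1) from rfl, iteratedDeriv_succ,
      show iteratedDeriv 3 = iteratedDeriv (2 + 1) from rfl, iteratedDeriv_succ, iteratedDeriv_succ,
      iteratedDeriv_one, hD1, hD2, hD3, hD4, hD5]
  -- time derivative
  have hDT : deriv (fun t' => u x t') t =
      4 * a0 * c * (Real.tanh (x - b) - Real.tanh (x - b) ^ 3) := by
    have hut : (fun t' => u x t') = fun t' => a0 - 2 * a0 * Real.tanh (x - c * t') ^ 2 :=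
      funext fun t' => hu x t'
    rw [hut]
    have hin : HasDerivAt (fun t' : ℝ => x - c * t') (-c) t := by
      simpa using ((hasDerivAt_id t).const_mul c).const_sub x
    have htanh := (tanh_hasDerivAt' (x - c * t)).comp t hin
    have h : HasDerivAt (fun t' => a0 - 2 * a0 * Real.tanh (x - c * t') ^ 2)
        (4 * a0 * c * (Real.tanh (x - b) - Real.tanh (x - b) ^ 3)) t := by
      have h2 := ((htanh.pow 2).const_mul (2 * a0)).const_sub a0
      refine h2.congr_deriv ?_
      simp only [Function.comp_apply, hb]
      push_cast
      ring
    exact h.deriv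
  rw [hDT, hD1, hit3, hit5, hu, halpha, hbeta, hlam, hmu]
  have ha0' : (7 : ℝ) * a0 ^ 2 ≠ 0 := by positivity
  field_simp
  ring
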